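/- Suppose the loss ℓ_j(x) := ℓ(M(f_j(x)),y) is differentiable with L-Lipschitz gradient, g_j := ∇ℓ_j(x), and the attack succeeds on pipeline j only when ℓ_j(x+δ) - ℓ_j(x) ≥ m for a margin m > 0. If δ = ε·g_i/‖g_i‖, ‖g_j‖ ≤ G, and ⟪g_i,g_j⟫ ≥ 0, then a necessary condition for success is ε·G·√Γ(g_i,g_j) + (L/2)·ε² ≥ m. In particular, if ε·G·√Γ(g_i,g_j) + (L/2)ε² < m, the attack crafted on f_i fails to transfer to f_j. -/

import Mathlib

open RealInnerProductSpace

theorem transfer_necessary_condition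
    {E : Type*} [NormedAddCommGroup E] [InnerProductSpace ℝ E] [CompleteSpace E]
    (ℓj : E → ℝ) (hdiff : Differentiable ℝ ℓj)
    (L : ℝ) (hL : 0 ≤ L)
    (hLip : ∀ a b : E, ‖gradient ℓj a - gradient ℓj b‖ ≤ L * ‖a - b‖)
    (x : E) (g_i g_j : E) (hgi : g_i ≠ 0) (hgj : g_j = gradient ℓj x)
    (G : ℝ) (hG : ‖g_j‖ ≤ G)
    (ε m : ℝ) (hε : 0 < ε) (hm : 0 < m)
    (hpos : 0 ≤ ⟪g_i, g_j⟫)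
    (δ : E) (hδ : δ = ε • (‖g_i‖⁻¹ • g_i))
    (hsuccess : m ≤ ℓj (x + δ) - ℓj x) :
    m ≤ ε * G * Real.sqrt ((⟪g_i, g_j⟫ / (‖g_i‖ * ‖g_j‖))^2) + (L / 2) * ε^2 := by
  have hGnn : 0 ≤ G := le_trans (norm_nonneg _) hG
  -- norm of δ is ε
  have hnδ : ‖δ‖ = ε := by
    rw [hδ, norm_smul, norm_smul, norm_inv, norm_norm,
      inv_mul_cancel₀ (norm_ne_zero_iff.mpr hgi), mul_one, Real.norm_eq_abs,
      abs_of_pos hε]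
  -- derivative of the auxiliary function
  have hderiv : ∀ t : ℝ, HasDerivAt
      (fun t : ℝ => ℓj (x + t • δ) - t * ⟪g_j, δ⟫ - L / 2 * t ^ 2 * ‖δ‖ ^ 2)
      (⟪gradient ℓj (x + t • δ), δ⟫ - ⟪g_j, δ⟫ - L / 2 * (2 * t) * ‖δ‖ ^ 2) t := by
    intro t
    have hline : HasDerivAt (fun t : ℝ => x + t • δ) δ t := by
      simpa using ((hasDerivAt_id t).smul_const δ).const_add x
    have hgrad := (hdiff (x + t • δ)).hasGradientAt
    have hcomp := hgrad.hasFDerivAt.comp_hasDerivAt t hline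
    have hval : (InnerProductSpace.toDual ℝ E (gradient ℓj (x + t • δ))) δ
        = ⟪gradient ℓj (x + t • δ), δ⟫ := rfl
    rw [hval] at hcomp
    have h1 := (hasDerivAt_id t).mul_const (⟪g_j, δ⟫ : ℝ)
    have h2 := ((hasDerivAt_pow 2 t).const_mul (L / 2)).mul_const (‖δ‖ ^ 2)
    have h3 := (hcomp.sub h1).sub h2
    refine h3.congr_deriv ?_
    push_cast
    ring
  -- descent lemma via antitonicity on [0,1]
  have hanti : AntitoneOn
      (fun t : ℝ => ℓj (x + t • δ) - t * ⟪g_j, δ⟫ - L / 2 * t ^ 2 * ‖δ‖ ^ 2)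
      (Set.Icc 0 1) := by
    apply antitoneOn_of_deriv_nonpos (convex_Icc 0 1)
    · exact fun t _ => ((hderiv t).continuousAt).continuousWithinAt
    · exact fun t _ => ((hderiv t).differentiableAt).differentiableWithinAt
    · intro t ht
      rw [interior_Icc] at ht
      rw [(hderiv t).deriv]
      have h1 : ⟪gradient ℓj (x + t • δ), δ⟫ - ⟪g_j, δ⟫
          = ⟪gradient ℓj (x + t • δ) - g_j, δ⟫ := by rw [inner_sub_left]
      have h2 : ⟪gradient ℓj (x + t • δ) - g_j, δ⟫ ≤ L * t * ‖δ‖ ^ 2 := by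
        calc ⟪gradient ℓj (x + t • δ) - g_j, δ⟫
            ≤ ‖gradient ℓj (x + t • δ) - g_j‖ * ‖δ‖ := real_inner_le_norm _ _
          _ ≤ (L * ‖(x + t • δ) - x‖) * ‖δ‖ := by
              rw [hgj]
              exact mul_le_mul_of_nonneg_right (hLip _ _) (norm_nonneg _)
          _ = L * t * ‖δ‖ ^ 2 := by
              rw [add_sub_cancel_left, norm_smul, Real.norm_eq_abs, abs_of_pos ht.1]
              ring
      nlinarith [sq_nonneg ‖δ‖]
  have hm01 : (0:ℝ) ∈ Set.Icc (0:ℝ) 1 := by norm_num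
  have hm11 : (1:ℝ) ∈ Set.Icc (0:ℝ) 1 := by norm_num
  have hkey := hanti hm01 hm11 zero_le_one
  simp only [zero_smul, add_zero, one_smul, zero_mul, one_pow, mul_one, sub_zero] at hkey
  -- hence m ≤ ⟪g_j, δ⟫ + L/2 * ‖δ‖^2
  have hstep : m ≤ ⟪g_j, δ⟫ + L / 2 * ‖δ‖ ^ 2 := by linarith
  rw [hnδ] at hstep
  -- bound the inner product term
  have hinner : ⟪g_j, δ⟫ ≤ ε * G * Real.sqrt ((⟪g_i, g_j⟫ / (‖g_i‖ * ‖g_j‖))^2) := by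
    have hδval : ⟪g_j, δ⟫ = ε * ‖g_i‖⁻¹ * ⟪g_i, g_j⟫ := by
      rw [hδ, real_inner_smul_right, real_inner_smul_right, real_inner_comm]; ring
    rw [Real.sqrt_sq_eq_abs, abs_div, abs_mul, abs_norm, abs_norm,
      abs_of_nonneg hpos]
    rcases eq_or_ne g_j 0 with h0 | h0
    · subst h0
      simp [hδval]
    · have hgjn : 0 < ‖g_j‖ := norm_pos_iff.mpr h0
      have hgin : 0 < ‖g_i‖ := norm_pos_iff.mpr hgi
      rw [hδval, div_eq_mul_inv, mul_inv]
      have : ε * ‖g_i‖⁻¹ * ⟪g_i, g_j⟫ = ε * ‖g_j‖ * (⟪g_i, g_j⟫ * (‖g_i‖⁻¹ * ‖g_j‖⁻¹)) := by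
        field_simp
      rw [this]
      have hfac : 0 ≤ ⟪g_i, g_j⟫ * (‖g_i‖⁻¹ * ‖g_j‖⁻¹) := by positivity
      have : ε * ‖g_j‖ ≤ ε * G := mul_le_mul_of_nonneg_left hG hε.le
      exact mul_le_mul_of_nonneg_right this hfac
  linarith
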